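/- Let n and d be positive integers, ℓ a Kupisch series of type Ã_{n-1}, f(i) = i - ℓ(i) - d + 1, I = { i ∈ ℤ : (i mod n) ∈ J }, ι : ℤ → I the unique order-preserving bijection, and ℓ'(k) = |[f(ι(k)), ι(k)] ∩ I| - d for k ∈ ℤ. Then there exists an integer ℓ' such that ℓ'(k) = ℓ' for all k ∈ ℤ; that is, the function ℓ' is constant. -/

import Mathlib

/-- The set of periodic points of the induced map `f̄ : ℤ/nℤ → ℤ/nℤ`. -/
def Jset (n : ℕ) (fbar : ZMod n → ZMod n) : Set (ZMod n) :=
  {j | ∃ N : ℕ, 1 ≤ N ∧ fbar^[N] j = j}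

/-- The set of integers whose residue mod `n` lies in `J`. -/
def Iset (n : ℕ) (fbar : ZMod n → ZMod n) : Set ℤ :=
  {i | (i : ZMod n) ∈ Jset n fbar}

/-- the function `ℓ' k = |[f(ι k), ι k] ∩ I| - d` is constant. -/
theorem ellprime_constant (n d : ℕ) (hn : 0 < n) (hd : 0 < d) (ℓ : ℤ → ℤ)
    (hK1 : ∀ i : ℤ, 1 ≤ ℓ i) (hK2 : ∀ i : ℤ, ℓ i ≤ ℓ (i - 1) + 1)
    (hKper : ∀ i : ℤ, ℓ (i + n) = ℓ i)
    (f : ℤ → ℤ) (hf : ∀ i : ℤ, f i = i - ℓ i - d + 1)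
    (fbar : ZMod n → ZMod n)
    (hfbar : ∀ i : ℤ, fbar (i : ZMod n) = ((f i : ℤ) : ZMod n))
    (ι : ℤ → ℤ) (hι : StrictMono ι) (hrange : Set.range ι = Iset n fbar)
    (ℓ' : ℤ → ℤ)
    (hℓ' : ∀ k : ℤ,
      ℓ' k = ((Set.Icc (f (ι k)) (ι k) ∩ Iset n fbar).ncard : ℤ) - d) :
    ∃ c : ℤ, ∀ k : ℤ, ℓ' k = c := by
  have hn' : (0 : ℤ) < n := by exact_mod_cast hn
  have hd' : (1 : ℤ) ≤ d := by exact_mod_cast hd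
  -- periodicity of ℓ for all integer multiples of n
  have hℓper : ∀ (t : ℤ) (i : ℤ), ℓ (i + t * n) = ℓ i := by
    intro t
    induction t using Int.induction_on with
    | zero => intro i; simp
    | succ t ih =>
        intro i
        have e : i + ((t : ℤ) + 1) * n = (i + t * n) + n := by ring
        rw [e, hKper, ih]
    | pred t ih =>
        intro i
        have e : i + (-(t : ℤ)) * n = (i + (-(t : ℤ) - 1) * n) + n := by ring
        have := hKper (i + (-(t : ℤ) - 1) * n)
        rw [← e, ih] at this
        exact this.symm
  have hfmul : ∀ (i t : ℤ), f (i + t * n) = f i + t * n := by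
    intro i t
    rw [hf, hf, hℓper]
    ring
  -- f is monotone
  have hmono : Monotone f := by
    apply monotone_int_of_le_succ
    intro i
    have h2 := hK2 (i + 1)
    simp only [add_sub_cancel_right] at h2
    rw [hf, hf]
    linarith
  have hflt : ∀ i : ℤ, f i < i := by
    intro i
    have := hK1 i
    rw [hf]
    linarith
  -- Iset is invariant under +n
  have hshift : ∀ i : ℤ, (i + (n : ℤ)) ∈ Iset n fbar ↔ i ∈ Iset n fbar := by
    intro i
    have : ((i + (n : ℤ) : ℤ) : ZMod n) = (i : ZMod n) := by
      push_cast
      simp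
    simp only [Iset, Set.mem_setOf_eq, this]
  -- f preserves Iset
  have hfI : ∀ i ∈ Iset n fbar, f i ∈ Iset n fbar := by
    intro i hi
    obtain ⟨N, hN, hfix⟩ := hi
    refine ⟨N, hN, ?_⟩
    rw [← hfbar]
    calc fbar^[N] (fbar (i : ZMod n)) = fbar^[N + 1] (i : ZMod n) := by
          rw [Function.iterate_succ_apply]
      _ = fbar (fbar^[N] (i : ZMod n)) := by rw [Function.iterate_succ_apply']
      _ = fbar (i : ZMod n) := by rw [hfix]
  -- fbar is injective on Jset
  have hJinj : ∀ j ∈ Jset n fbar, ∀ j' ∈ Jset n fbar, fbar j = fbar j' → j = j' := by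
    intro j hj j' hj' he
    obtain ⟨N, hN, hfix⟩ := hj
    obtain ⟨N', hN', hfix'⟩ := hj'
    have hfixM : fbar^[N * N'] j = j := by
      rw [Function.iterate_mul]
      exact Function.iterate_fixed hfix N'
    have hfixM' : fbar^[N * N'] j' = j' := by
      rw [mul_comm, Function.iterate_mul]
      exact Function.iterate_fixed hfix' N
    have hM : N * N' = (N * N' - 1) + 1 := by
      have : 1 ≤ N * N' := Nat.one_le_iff_ne_zero.mpr (by positivity)
      omega
    rw [hM, Function.iterate_succ_apply, he] at hfixM
    rw [hM, Function.iterate_succ_apply] at hfixM'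
    exact hfixM.symm.trans hfixM'
  -- f is injective on Iset
  have hfinj : ∀ i ∈ Iset n fbar, ∀ i' ∈ Iset n fbar, f i = f i' → i = i' := by
    intro i hi i' hi' he
    have hcast : (i : ZMod n) = (i' : ZMod n) := by
      apply hJinj _ hi _ hi'
      rw [hfbar, hfbar, he]
    have hdvd : ((n : ℤ)) ∣ i' - i := (ZMod.intCast_eq_intCast_iff i i' n).mp hcast |>.dvd
    obtain ⟨t, ht⟩ := hdvd
    have hi'' : i' = i + t * n := by linarith
    rw [hi'', hfmul] at he
    have : t * n = 0 := by linarith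
    rcases mul_eq_zero.mp this with h | h
    · rw [hi'', h]; ring
    · exfalso; linarith
  have hmemι : ∀ k : ℤ, ι k ∈ Iset n fbar := by
    intro k
    rw [← hrange]
    exact ⟨k, rfl⟩
  -- define g with ι (g k) = f (ι k)
  have hgex : ∀ k : ℤ, ∃ k', ι k' = f (ι k) := by
    intro k
    have : f (ι k) ∈ Set.range ι := by
      rw [hrange]
      exact hfI _ (hmemι k)
    exact this
  choose g hg using hgex
  -- define σ with ι (σ k) = ι k + n
  have hσex : ∀ k : ℤ, ∃ k', ι k' = ι k + n := by
    intro k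
    have : ι k + (n : ℤ) ∈ Set.range ι := by
      rw [hrange]
      exact (hshift (ι k)).mpr (hmemι k)
    exact this
  choose σ hσ using hσex
  -- g is strictly monotone
  have hgmono : StrictMono g := by
    intro a b hab
    have h1 : ι (g a) ≤ ι (g b) := by
      rw [hg, hg]
      exact hmono (hι hab).le
    have hne : g a ≠ g b := by
      intro he
      have : f (ι a) = f (ι b) := by rw [← hg, ← hg, he]
      have := hfinj _ (hmemι a) _ (hmemι b) this
      exact absurd (hι.injective this) hab.ne
    exact lt_of_le_of_ne (hι.le_iff_le.mp h1) hne
  have hglt : ∀ k : ℤ, g k < k := by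
    intro k
    have : ι (g k) < ι k := by rw [hg]; exact hflt (ι k)
    exact hι.lt_iff_lt.mp this
  -- σ (k+1) = σ k + 1
  have hσsucc : ∀ k : ℤ, σ (k + 1) = σ k + 1 := by
    intro k
    have h1 : σ k < σ (k + 1) := by
      apply hι.lt_iff_lt.mp
      rw [hσ, hσ]
      have := hι (lt_add_one k)
      linarith
    by_contra hne
    have hlt : σ k + 1 < σ (k + 1) := by omega
    -- then ι (σ k + 1) is strictly between ι k + n and ι (k+1) + n
    have hx1 : ι k + (n : ℤ) < ι (σ k + 1) := by
      rw [← hσ]; exact hι (lt_add_one (σ k))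
    have hx2 : ι (σ k + 1) < ι (k + 1) + n := by
      rw [← hσ]; exact hι hlt
    have hxI : ι (σ k + 1) - n ∈ Iset n fbar := by
      rw [← hshift]
      have e : ι (σ k + 1) - n + n = ι (σ k + 1) := by ring
      rw [e]
      exact hmemι _
    have : ι (σ k + 1) - (n : ℤ) ∈ Set.range ι := by rw [hrange]; exact hxI
    obtain ⟨j, hj⟩ := this
    have hj1 : ι k < ι j := by rw [hj]; linarith
    have hj2 : ι j < ι (k + 1) := by rw [hj]; linarith
    have := hι.lt_iff_lt.mp hj1
    have := hι.lt_iff_lt.mp hj2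
    omega
  -- σ k = k + σ 0
  have hσlin : ∀ k : ℤ, σ k = k + σ 0 := by
    intro k
    induction k using Int.induction_on with
    | zero => simp
    | succ t ih => rw [hσsucc, ih]; ring
    | pred t ih =>
        have := hσsucc (-(t : ℤ) - 1)
        have e : -(t : ℤ) - 1 + 1 = -(t : ℤ) := by ring
        rw [e, ih] at this
        omega
  have hm : 1 ≤ σ 0 := by
    have : ι 0 < ι (σ 0) := by rw [hσ]; linarith
    have := hι.lt_iff_lt.mp this
    omega
  -- periodicity of g
  have hgper : ∀ k : ℤ, g (k + σ 0) = g k + σ 0 := by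
    intro k
    apply hι.injective
    rw [hg]
    have e1 : ι (k + σ 0) = ι k + n := by rw [← hσlin, hσ]
    have e2 : ι (g k + σ 0) = ι (g k) + n := by rw [← hσlin, hσ]
    rw [e1, e2, hg]
    have := hfmul (ι k) 1
    rw [one_mul] at this
    exact this
  -- h k = k - g k is antitone and periodic, hence constant
  set h : ℤ → ℤ := fun k => k - g k with hh
  have hanti : Antitone h := by
    apply antitone_int_of_succ_le
    intro k
    have := hgmono (lt_add_one k)
    simp only [hh]
    omega
  have hper2 : ∀ k : ℤ, h (k + σ 0) = h k := by
    intro k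
    simp only [hh, hgper]
    ring
  have hpermul : ∀ t : ℕ, ∀ k : ℤ, h (k + t * σ 0) = h k := by
    intro t
    induction t with
    | zero => intro k; simp
    | succ t ih =>
        intro k
        have e : k + ((t : ℤ) + 1) * σ 0 = (k + t * σ 0) + σ 0 := by ring
        push_cast
        rw [e, hper2, ih]
  have hconst : ∀ k : ℤ, h k = h 0 := by
    intro k
    rcases le_or_gt 0 k with hk | hk
    · -- 0 ≤ k ≤ k.toNat * σ 0
      have h1 : h k ≤ h 0 := hanti hk
      have h2 : h (0 + (k.toNat : ℤ) * σ 0) = h 0 := hpermul k.toNat 0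
      have h3 : k ≤ 0 + (k.toNat : ℤ) * σ 0 := by
        have : (k.toNat : ℤ) = k := Int.toNat_of_nonneg hk
        nlinarith
      have h4 : h (0 + (k.toNat : ℤ) * σ 0) ≤ h k := hanti h3
      omega
    · have h1 : h 0 ≤ h k := hanti hk.le
      have h2 : h (-(((-k).toNat : ℤ) * σ 0) + ((-k).toNat : ℤ) * σ 0) = h (-(((-k).toNat : ℤ) * σ 0)) := hpermul (-k).toNat _
      have e : -(((-k).toNat : ℤ) * σ 0) + ((-k).toNat : ℤ) * σ 0 = 0 := by ring
      rw [e] at h2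
      have h3 : -(((-k).toNat : ℤ) * σ 0) ≤ k := by
        have : ((-k).toNat : ℤ) = -k := Int.toNat_of_nonneg (by omega)
        nlinarith
      have h4 : h k ≤ h (-(((-k).toNat : ℤ) * σ 0)) := hanti h3
      omega
  -- the counting identity
  have hcount : ∀ k : ℤ,
      (Set.Icc (f (ι k)) (ι k) ∩ Iset n fbar) = ι '' Set.Icc (g k) k := by
    intro k
    ext x
    constructor
    · rintro ⟨⟨hx1, hx2⟩, hxI⟩
      have : x ∈ Set.range ι := by rw [hrange]; exact hxI
      obtain ⟨j, rfl⟩ := this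
      rw [← hg] at hx1
      exact ⟨j, ⟨hι.le_iff_le.mp hx1, hι.le_iff_le.mp hx2⟩, rfl⟩
    · rintro ⟨j, ⟨hj1, hj2⟩, rfl⟩
      refine ⟨⟨?_, hι.monotone hj2⟩, hmemι j⟩
      rw [← hg]
      exact hι.monotone hj1
  have hncard : ∀ k : ℤ,
      ((Set.Icc (f (ι k)) (ι k) ∩ Iset n fbar).ncard : ℤ) = k - g k + 1 := by
    intro k
    rw [hcount, Set.ncard_image_of_injective _ hι.injective, ← Finset.coe_Icc,
      Set.ncard_coe_finset, Int.card_Icc]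
    have := hglt k
    omega
  refine ⟨h 0 + 1 - d, fun k => ?_⟩
  rw [hℓ' k, hncard k, ← hconst k]
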